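/- arXiv:1711.08699 — 9 statements merged into one kernel-verified Lean document; each statement's English description precedes it below -/
import Mathlib

section
/- Let C be an ordered symmetric monoidal category equipped with a lax product structure {(Δ_X, ⊥_X)}. For objects M, N define the projections π₁ : M⊗N ⟶ M as (id_M ⊗ ⊥_N) followed by the right unitor, and π₂ : M⊗N ⟶ N as (⊥_M ⊗ id_N) followed by the left unitor. Then for all morphisms f : K ⟶ M and g : K ⟶ N, the morphism h := Δ_K ; (f ⊗ g) satisfies h ; π₁ ≤ f and h ; π₂ ≤ g, and h is the greatest such morphism: every h' : K ⟶ M⊗N with h' ; π₁ ≤ f and h' ; π₂ ≤ g satisfies h' ≤ h. (Hence the monoidal product of C is a lax product of M and N in the bicategorical sense.) -/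
open CategoryTheory MonoidalCategory

universe v u

/-- An ordered symmetric monoidal category: each hom-set carries a partial order (supplied
as an instance) making composition and tensoring of morphisms monotone. -/
class OrderedSMC (C : Type u) [Category.{v} C] [MonoidalCategory C]
    [SymmetricCategory C] [∀ X Y : C, PartialOrder (X ⟶ Y)] : Prop where
  comp_mono : ∀ {X Y Z : C} {f f' : X ⟶ Y} {g g' : Y ⟶ Z},
    f ≤ f' → g ≤ g' → f ≫ g ≤ f' ≫ g'
  tensor_mono : ∀ {X X' Y Y' : C} {f f' : X ⟶ X'} {g g' : Y ⟶ Y'},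
    f ≤ f' → g ≤ g' → (f ⊗ₘ g) ≤ (f' ⊗ₘ g')

/-- A lax product structure on an ordered symmetric monoidal category: a choice of
cocommutative comonoid `(Δ_X, ⊥_X)` on each object, compatible with the monoidal product,
such that every morphism is a lax comonoid homomorphism. -/
structure LaxProductStructure (C : Type u) [Category.{v} C] [MonoidalCategory C]
    [SymmetricCategory C] [∀ X Y : C, PartialOrder (X ⟶ Y)] where
  /-- comultiplication Δ -/
  dup : ∀ X : C, X ⟶ X ⊗ X
  /-- counit ⊥ -/
  bot : ∀ X : C, X ⟶ 𝟙_ C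
  dup_coassoc : ∀ X : C, dup X ≫ (dup X ▷ X) ≫ (α_ X X X).hom = dup X ≫ (X ◁ dup X)
  dup_bot_left : ∀ X : C, dup X ≫ (bot X ▷ X) = (λ_ X).inv
  dup_bot_right : ∀ X : C, dup X ≫ (X ◁ bot X) = (ρ_ X).inv
  dup_cocomm : ∀ X : C, dup X ≫ (β_ X X).hom = dup X
  dup_tensor : ∀ X Y : C, dup (X ⊗ Y) = (dup X ⊗ₘ dup Y) ≫ tensorμ X X Y Y
  bot_tensor : ∀ X Y : C, bot (X ⊗ Y) = (bot X ⊗ₘ bot Y) ≫ (λ_ (𝟙_ C)).hom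
  lax_dup : ∀ {X Y : C} (f : X ⟶ Y), f ≫ dup Y ≤ dup X ≫ (f ⊗ₘ f)
  lax_bot : ∀ {X Y : C} (f : X ⟶ Y), f ≫ bot Y ≤ bot X

section Aux
variable {C : Type u} [Category.{v} C] [MonoidalCategory C]
    [SymmetricCategory C] [∀ X Y : C, PartialOrder (X ⟶ Y)]

lemma tensorμ_unit_coh (M N : C) :
    ((ρ_ M).inv ⊗ₘ (λ_ N).inv) ≫ tensorμ M (𝟙_ C) (𝟙_ C) N ≫ ((ρ_ M).hom ⊗ₘ (λ_ N).hom)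
      = 𝟙 (M ⊗ N) := by
  simp only [tensorμ, braiding_tensorUnit_left]
  monoidal

lemma dup_proj (L : LaxProductStructure C) (M N : C) :
    L.dup (M ⊗ N) ≫ (((𝟙 M ⊗ₘ L.bot N) ≫ (ρ_ M).hom) ⊗ₘ ((L.bot M ⊗ₘ 𝟙 N) ≫ (λ_ N).hom))
      = 𝟙 (M ⊗ N) := by
  rw [L.dup_tensor, ← tensorHom_comp_tensorHom, ← Category.assoc, Category.assoc _ (tensorμ M M N N),
    ← tensorμ_natural (𝟙 M) (L.bot M) (L.bot N) (𝟙 N)]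
  rw [← Category.assoc, tensorHom_comp_tensorHom]
  have h1 : L.dup M ≫ (𝟙 M ⊗ₘ L.bot M) = (ρ_ M).inv := by
    rw [id_tensorHom]; exact L.dup_bot_right M
  have h2 : L.dup N ≫ (L.bot N ⊗ₘ 𝟙 N) = (λ_ N).inv := by
    rw [tensorHom_id]; exact L.dup_bot_left N
  rw [h1, h2, Category.assoc, tensorμ_unit_coh]

end Aux

/-- The monoidal product of an ordered symmetric monoidal category with a lax product
structure is a lax product: with projections `π₁ = (id ⊗ₘ ⊥);ρ` and `π₂ = (⊥ ⊗ₘ id);λ`,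
`h := Δ_K;(f ⊗ₘ g)` satisfies `h;π₁ ≤ f` and `h;π₂ ≤ g` and is the greatest morphism
with these properties. -/
theorem laxProduct_of_laxProductStructure {C : Type u} [Category.{v} C] [MonoidalCategory C]
    [SymmetricCategory C] [∀ X Y : C, PartialOrder (X ⟶ Y)] [OrderedSMC C]
    (L : LaxProductStructure C) (K M N : C) (f : K ⟶ M) (g : K ⟶ N) :
    (L.dup K ≫ (f ⊗ₘ g)) ≫ ((𝟙 M ⊗ₘ L.bot N) ≫ (ρ_ M).hom) ≤ f ∧
    (L.dup K ≫ (f ⊗ₘ g)) ≫ ((L.bot M ⊗ₘ 𝟙 N) ≫ (λ_ N).hom) ≤ g ∧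
    (∀ h' : K ⟶ M ⊗ N,
      h' ≫ ((𝟙 M ⊗ₘ L.bot N) ≫ (ρ_ M).hom) ≤ f →
      h' ≫ ((L.bot M ⊗ₘ 𝟙 N) ≫ (λ_ N).hom) ≤ g →
      h' ≤ L.dup K ≫ (f ⊗ₘ g)) := by
  refine ⟨?_, ?_, ?_⟩
  · calc (L.dup K ≫ (f ⊗ₘ g)) ≫ ((𝟙 M ⊗ₘ L.bot N) ≫ (ρ_ M).hom)
        = L.dup K ≫ (f ⊗ₘ (g ≫ L.bot N)) ≫ (ρ_ M).hom := by
          simp only [Category.assoc, tensorHom_comp_tensorHom_assoc, Category.comp_id]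
      _ ≤ L.dup K ≫ (f ⊗ₘ L.bot K) ≫ (ρ_ M).hom :=
          OrderedSMC.comp_mono le_rfl (OrderedSMC.comp_mono
            (OrderedSMC.tensor_mono le_rfl (L.lax_bot g)) le_rfl)
      _ = f := by
          rw [show (f ⊗ₘ L.bot K) = (𝟙 K ⊗ₘ L.bot K) ≫ (f ⊗ₘ 𝟙 (𝟙_ C)) by
            rw [tensorHom_comp_tensorHom]; simp]
          rw [← Category.assoc, ← Category.assoc, id_tensorHom, L.dup_bot_right,
            tensorHom_id, Category.assoc]
          simp
  · calc (L.dup K ≫ (f ⊗ₘ g)) ≫ ((L.bot M ⊗ₘ 𝟙 N) ≫ (λ_ N).hom)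
        = L.dup K ≫ ((f ≫ L.bot M) ⊗ₘ g) ≫ (λ_ N).hom := by
          simp only [Category.assoc, tensorHom_comp_tensorHom_assoc, Category.comp_id]
      _ ≤ L.dup K ≫ (L.bot K ⊗ₘ g) ≫ (λ_ N).hom :=
          OrderedSMC.comp_mono le_rfl (OrderedSMC.comp_mono
            (OrderedSMC.tensor_mono (L.lax_bot f) le_rfl) le_rfl)
      _ = g := by
          rw [show (L.bot K ⊗ₘ g) = (L.bot K ⊗ₘ 𝟙 K) ≫ (𝟙 (𝟙_ C) ⊗ₘ g) by
            rw [tensorHom_comp_tensorHom]; simp]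
          rw [← Category.assoc, ← Category.assoc, tensorHom_id, L.dup_bot_left,
            id_tensorHom, Category.assoc, id_whiskerLeft]
          simp
  · intro h' h1 h2
    calc h' = h' ≫ L.dup (M ⊗ N)
              ≫ (((𝟙 M ⊗ₘ L.bot N) ≫ (ρ_ M).hom) ⊗ₘ ((L.bot M ⊗ₘ 𝟙 N) ≫ (λ_ N).hom)) := by
          rw [dup_proj]; simp
      _ ≤ (L.dup K ≫ (h' ⊗ₘ h'))
              ≫ (((𝟙 M ⊗ₘ L.bot N) ≫ (ρ_ M).hom) ⊗ₘ ((L.bot M ⊗ₘ 𝟙 N) ≫ (λ_ N).hom)) := by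
          rw [← Category.assoc]
          exact OrderedSMC.comp_mono (L.lax_dup h') le_rfl
      _ = L.dup K ≫ ((h' ≫ (𝟙 M ⊗ₘ L.bot N) ≫ (ρ_ M).hom)
              ⊗ₘ (h' ≫ (L.bot M ⊗ₘ 𝟙 N) ≫ (λ_ N).hom)) := by
          rw [Category.assoc, tensorHom_comp_tensorHom]
      _ ≤ L.dup K ≫ (f ⊗ₘ g) :=
          OrderedSMC.comp_mono le_rfl (OrderedSMC.tensor_mono h1 h2)
end

section
/- In an ordered symmetric monoidal category, a lax product structure, if it exists, is unique: if {(Δ_X, ⊥_X)} and {(Δ'_X, ⊥'_X)} are both lax product structures on C, then Δ_X = Δ'_X and ⊥_X = ⊥'_X for every object X. -/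
open CategoryTheory MonoidalCategory

universe v u

section Aux

variable {C : Type u} [Category.{v} C] [MonoidalCategory C] [SymmetricCategory C]

/-- Projecting the outer components out of a duplicated tensor square gives the identity. -/
theorem LaxProduct.aux_proj (X : C) (d : X ⟶ X ⊗ X) (b : X ⟶ 𝟙_ C)
    (h1 : d ≫ (b ▷ X) = (λ_ X).inv) (h2 : d ≫ (X ◁ b) = (ρ_ X).inv) :
    (d ⊗ₘ d) ≫ tensorμ X X X X ≫ (((X ◁ b) ≫ (ρ_ X).hom) ⊗ₘ ((b ▷ X) ≫ (λ_ X).hom)) = 𝟙 (X ⊗ X) := by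
  have hβ : (β_ (𝟙_ C) (𝟙_ C)).hom = (λ_ (𝟙_ C)).hom ≫ (ρ_ (𝟙_ C)).inv := by
    rw [← braiding_rightUnitor (𝟙_ C)]; simp
  have nat := tensorμ_natural (𝟙 X) b b (𝟙 X)
  calc (d ⊗ₘ d) ≫ tensorμ X X X X ≫ (((X ◁ b) ≫ (ρ_ X).hom) ⊗ₘ ((b ▷ X) ≫ (λ_ X).hom))
      = (d ⊗ₘ d) ≫ (tensorμ X X X X ≫ ((𝟙 X ⊗ₘ b) ⊗ₘ (b ⊗ₘ 𝟙 X))) ≫ ((ρ_ X).hom ⊗ₘ (λ_ X).hom) := by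
        rw [← tensorHom_comp_tensorHom, id_tensorHom, tensorHom_id]; simp
    _ = (d ⊗ₘ d) ≫ (((𝟙 X ⊗ₘ b) ⊗ₘ (b ⊗ₘ 𝟙 X)) ≫ tensorμ X (𝟙_ C) (𝟙_ C) X) ≫ ((ρ_ X).hom ⊗ₘ (λ_ X).hom) := by
        rw [nat]
    _ = ((ρ_ X).inv ⊗ₘ (λ_ X).inv) ≫ tensorμ X (𝟙_ C) (𝟙_ C) X ≫ ((ρ_ X).hom ⊗ₘ (λ_ X).hom) := by
        rw [← Category.assoc, ← Category.assoc, tensorHom_comp_tensorHom, id_tensorHom, tensorHom_id,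
          h1, h2, Category.assoc]
    _ = 𝟙 (X ⊗ X) := by
        simp only [tensorμ, hβ]
        coherence

/-- In the unit object, `λ⁻¹ ≫ (f ⊗ₘ g) ≫ λ = f ≫ g` for endomorphisms of the unit. -/
theorem LaxProduct.aux_unit (f g : (𝟙_ C) ⟶ (𝟙_ C)) :
    (λ_ (𝟙_ C)).inv ≫ (f ⊗ₘ g) ≫ (λ_ (𝟙_ C)).hom = f ≫ g := by
  rw [MonoidalCategory.tensorHom_def, unitors_inv_equal, Category.assoc, ← rightUnitor_inv_naturality_assoc,
    ← unitors_inv_equal, ← leftUnitor_inv_naturality_assoc]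
  simp

/-- The counit of any lax product structure is the identity on the unit object. -/
theorem LaxProduct.bot_unit [∀ X Y : C, PartialOrder (X ⟶ Y)] [OrderedSMC C]
    (L : LaxProductStructure C) : L.bot (𝟙_ C) = 𝟙 (𝟙_ C) := by
  set ε := L.bot (𝟙_ C) with hε
  have hinv : (L.dup (𝟙_ C) ≫ (ρ_ (𝟙_ C)).hom) ≫ ε = 𝟙 (𝟙_ C) := by
    have := L.dup_bot_left (𝟙_ C)
    calc (L.dup (𝟙_ C) ≫ (ρ_ (𝟙_ C)).hom) ≫ ε
        = L.dup (𝟙_ C) ≫ (ε ▷ (𝟙_ C)) ≫ (ρ_ (𝟙_ C)).hom := by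
          rw [rightUnitor_naturality]; simp
      _ = (λ_ (𝟙_ C)).inv ≫ (ρ_ (𝟙_ C)).hom := by rw [reassoc_of% this]
      _ = 𝟙 (𝟙_ C) := by rw [← unitors_equal]; simp
  have hidem : ε ≫ ε = ε := by
    apply le_antisymm
    · have h := L.lax_bot (Y := (𝟙_ C) ⊗ (𝟙_ C)) (λ_ (𝟙_ C)).inv
      rw [L.bot_tensor] at h
      simpa [LaxProduct.aux_unit] using h
    · have h := L.lax_bot (Y := (𝟙_ C)) (λ_ (𝟙_ C)).hom
      have h2 := OrderedSMC.comp_mono (le_refl (λ_ (𝟙_ C)).inv) h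
      rw [L.bot_tensor] at h2
      simpa [LaxProduct.aux_unit] using h2
  calc ε = ((L.dup (𝟙_ C) ≫ (ρ_ (𝟙_ C)).hom) ≫ ε) ≫ ε := by rw [hinv]; simp
    _ = (L.dup (𝟙_ C) ≫ (ρ_ (𝟙_ C)).hom) ≫ ε ≫ ε := by simp
    _ = (L.dup (𝟙_ C) ≫ (ρ_ (𝟙_ C)).hom) ≫ ε := by rw [hidem]
    _ = 𝟙 (𝟙_ C) := hinv

end Aux

section Main

variable {C : Type u} [Category.{v} C] [MonoidalCategory C] [SymmetricCategory C]
  [∀ X Y : C, PartialOrder (X ⟶ Y)] [OrderedSMC C]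

theorem LaxProduct.key (M : LaxProductStructure C) (X : C) :
    M.dup (X ⊗ X) ≫ (((X ◁ M.bot X) ≫ (ρ_ X).hom) ⊗ₘ ((M.bot X ▷ X) ≫ (λ_ X).hom)) = 𝟙 (X ⊗ X) := by
  rw [M.dup_tensor, Category.assoc]
  exact LaxProduct.aux_proj X (M.dup X) (M.bot X) (M.dup_bot_left X) (M.dup_bot_right X)

theorem LaxProduct.cancel (M : LaxProductStructure C) (X : C) :
    (M.dup X ⊗ₘ M.dup X) ≫ (((X ◁ M.bot X) ≫ (ρ_ X).hom) ⊗ₘ ((M.bot X ▷ X) ≫ (λ_ X).hom)) = 𝟙 (X ⊗ X) := by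
  rw [tensorHom_comp_tensorHom]
  have e1 : M.dup X ≫ (X ◁ M.bot X) ≫ (ρ_ X).hom = 𝟙 X := by
    rw [← Category.assoc, M.dup_bot_right]; simp
  have e2 : M.dup X ≫ (M.bot X ▷ X) ≫ (λ_ X).hom = 𝟙 X := by
    rw [← Category.assoc, M.dup_bot_left]; simp
  rw [e1, e2, id_tensorHom_id]

theorem LaxProduct.dup_le (A B : LaxProductStructure C) (hb : ∀ Y : C, A.bot Y = B.bot Y)
    (X : C) : A.dup X ≤ B.dup X := by
  have h := B.lax_dup (A.dup X)
  have h2 := OrderedSMC.comp_mono h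
    (le_refl (((X ◁ B.bot X) ≫ (ρ_ X).hom) ⊗ₘ ((B.bot X ▷ X) ≫ (λ_ X).hom)))
  have e1 : (A.dup X ≫ B.dup (X ⊗ X)) ≫
      (((X ◁ B.bot X) ≫ (ρ_ X).hom) ⊗ₘ ((B.bot X ▷ X) ≫ (λ_ X).hom)) = A.dup X := by
    rw [Category.assoc, LaxProduct.key B X, Category.comp_id]
  have e2 : (B.dup X ≫ (A.dup X ⊗ₘ A.dup X)) ≫
      (((X ◁ B.bot X) ≫ (ρ_ X).hom) ⊗ₘ ((B.bot X ▷ X) ≫ (λ_ X).hom)) = B.dup X := by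
    rw [← hb, Category.assoc, LaxProduct.cancel A X, Category.comp_id]
  rwa [e1, e2] at h2

end Main

/-- A lax product structure on an ordered symmetric monoidal category, if it exists,
is unique. -/
theorem laxProductStructure_unique {C : Type u} [Category.{v} C] [MonoidalCategory C]
    [SymmetricCategory C] [∀ X Y : C, PartialOrder (X ⟶ Y)] [OrderedSMC C]
    (L L' : LaxProductStructure C) :
    (∀ X : C, L.dup X = L'.dup X) ∧ (∀ X : C, L.bot X = L'.bot X) := by
  have hbot : ∀ X : C, L.bot X = L'.bot X := by
    intro X
    apply le_antisymm
    · have h := L'.lax_bot (L.bot X)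
      rwa [LaxProduct.bot_unit L', Category.comp_id] at h
    · have h := L.lax_bot (L'.bot X)
      rwa [LaxProduct.bot_unit L, Category.comp_id] at h
  exact ⟨fun X => le_antisymm (LaxProduct.dup_le L L' hbot X)
    (LaxProduct.dup_le L' L (fun Y => (hbot Y).symm) X), hbot⟩
end

section
/- In any cartesian bicategory of relations, the special law holds for every object X: Δ_X ; ∇_X = id_X. -/
open CategoryTheory MonoidalCategory

universe v u

/-- A cartesian bicategory of relations: a poset-enriched symmetric monoidal category
in which every object carries a cocommutative comonoid `(dup, del)` and a commutative
monoid `(mrg, bng)`, compatible with the monoidal structure, satisfying the adjunction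
inequalities and the Frobenius law, and such that every morphism is a lax comonoid
homomorphism. -/
class CartesianBicatRel (C : Type u) [Category.{v} C] [MonoidalCategory C]
    [SymmetricCategory C] [∀ X Y : C, PartialOrder (X ⟶ Y)] where
  comp_mono : ∀ {X Y Z : C} {f f' : X ⟶ Y} {g g' : Y ⟶ Z},
    f ≤ f' → g ≤ g' → f ≫ g ≤ f' ≫ g'
  tensor_mono : ∀ {X X' Y Y' : C} {f f' : X ⟶ X'} {g g' : Y ⟶ Y'},
    f ≤ f' → g ≤ g' → (f ⊗ₘ g) ≤ (f' ⊗ₘ g')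
  /-- comultiplication Δ -/
  dup : ∀ X : C, X ⟶ X ⊗ X
  /-- counit ! -/
  del : ∀ X : C, X ⟶ 𝟙_ C
  /-- multiplication ∇ -/
  mrg : ∀ X : C, X ⊗ X ⟶ X
  /-- unit ? -/
  bng : ∀ X : C, 𝟙_ C ⟶ X
  dup_coassoc : ∀ X : C, dup X ≫ (dup X ▷ X) ≫ (α_ X X X).hom = dup X ≫ (X ◁ dup X)
  dup_del_left : ∀ X : C, dup X ≫ (del X ▷ X) = (λ_ X).inv
  dup_del_right : ∀ X : C, dup X ≫ (X ◁ del X) = (ρ_ X).inv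
  dup_cocomm : ∀ X : C, dup X ≫ (β_ X X).hom = dup X
  mrg_assoc : ∀ X : C, (mrg X ▷ X) ≫ mrg X = (α_ X X X).hom ≫ (X ◁ mrg X) ≫ mrg X
  mrg_bng_left : ∀ X : C, (bng X ▷ X) ≫ mrg X = (λ_ X).hom
  mrg_bng_right : ∀ X : C, (X ◁ bng X) ≫ mrg X = (ρ_ X).hom
  mrg_comm : ∀ X : C, (β_ X X).hom ≫ mrg X = mrg X
  dup_tensor : ∀ X Y : C, dup (X ⊗ Y) = (dup X ⊗ₘ dup Y) ≫ tensorμ X X Y Y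
  del_tensor : ∀ X Y : C, del (X ⊗ Y) = (del X ⊗ₘ del Y) ≫ (λ_ (𝟙_ C)).hom
  dup_unitObj : dup (𝟙_ C) = (λ_ (𝟙_ C)).inv
  del_unitObj : del (𝟙_ C) = 𝟙 (𝟙_ C)
  mrg_tensor : ∀ X Y : C, mrg (X ⊗ Y) = tensorμ X Y X Y ≫ (mrg X ⊗ₘ mrg Y)
  bng_tensor : ∀ X Y : C, bng (X ⊗ Y) = (λ_ (𝟙_ C)).inv ≫ (bng X ⊗ₘ bng Y)
  mrg_unitObj : mrg (𝟙_ C) = (λ_ (𝟙_ C)).hom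
  bng_unitObj : bng (𝟙_ C) = 𝟙 (𝟙_ C)
  adj_dup_unit : ∀ X : C, 𝟙 X ≤ dup X ≫ mrg X
  adj_dup_counit : ∀ X : C, mrg X ≫ dup X ≤ 𝟙 (X ⊗ X)
  adj_del_counit : ∀ X : C, bng X ≫ del X ≤ 𝟙 (𝟙_ C)
  adj_del_unit : ∀ X : C, 𝟙 X ≤ del X ≫ bng X
  frob_left : ∀ X : C, (dup X ▷ X) ≫ (α_ X X X).hom ≫ (X ◁ mrg X) = mrg X ≫ dup X
  frob_right : ∀ X : C, (X ◁ dup X) ≫ (α_ X X X).inv ≫ (mrg X ▷ X) = mrg X ≫ dup X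
  lax_dup : ∀ {X Y : C} (R : X ⟶ Y), R ≫ dup Y ≤ dup X ≫ (R ⊗ₘ R)
  lax_del : ∀ {X Y : C} (R : X ⟶ Y), R ≫ del Y ≤ del X

namespace CartesianBicatRel

variable {C : Type u} [Category.{v} C] [MonoidalCategory C] [SymmetricCategory C]
  [∀ X Y : C, PartialOrder (X ⟶ Y)] [CartesianBicatRel C]

/-- The dagger `R† : Y ⟶ X` of `R : X ⟶ Y`, built from the cup `η_X = ?;Δ` and
the cap `ε_Y = ∇;!`. -/
def dagger {X Y : C} (R : X ⟶ Y) : Y ⟶ X :=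
  (λ_ Y).inv ≫ ((bng X ≫ dup X) ▷ Y) ≫ (α_ X X Y).hom ≫
    (X ◁ (R ▷ Y)) ≫ (X ◁ (mrg Y ≫ del Y)) ≫ (ρ_ X).hom

/-- `R` is single-valued. -/
def SingleValued {X Y : C} (R : X ⟶ Y) : Prop := dup X ≫ (R ⊗ₘ R) ≤ R ≫ dup Y

/-- `R` is total. -/
def Total {X Y : C} (R : X ⟶ Y) : Prop := del X ≤ R ≫ del Y

/-- `R` is injective. -/
def Injective {X Y : C} (R : X ⟶ Y) : Prop := (R ⊗ₘ R) ≫ mrg Y ≤ mrg X ≫ R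

/-- `R` is surjective. -/
def Surjective {X Y : C} (R : X ⟶ Y) : Prop := bng Y ≤ bng X ≫ R

/-- A map is a single-valued and total morphism. -/
def IsMap {X Y : C} (R : X ⟶ Y) : Prop := SingleValued R ∧ Total R

/-- A comap is an injective and surjective morphism. -/
def IsComap {X Y : C} (R : X ⟶ Y) : Prop := Injective R ∧ Surjective R

end CartesianBicatRel

open CartesianBicatRel in
/-- In any cartesian bicategory of relations, the special law `Δ_X ; ∇_X = id_X` holds. -/
theorem special_law {C : Type u} [Category.{v} C] [MonoidalCategory C] [SymmetricCategory C]
    [∀ X Y : C, PartialOrder (X ⟶ Y)] [CartesianBicatRel C] (X : C) :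
    dup X ≫ mrg X = 𝟙 X := by
  -- Step 1: express Δ via the Frobenius law and the cup `?;Δ`.
  have hdup : dup X = (λ_ X).inv ≫ ((bng X ≫ dup X) ▷ X) ≫ (α_ X X X).hom ≫
      (X ◁ mrg X) := by
    rw [comp_whiskerRight]
    slice_rhs 3 5 => rw [frob_left X]
    slice_rhs 2 3 => rw [mrg_bng_left X]
    simp
  -- Step 2: the cup followed by ∇ is below `?`.
  have hcup : (bng X ≫ dup X) ≫ mrg X ≤ bng X := by
    have h1 : bng X ≫ dup X ≤ (λ_ (𝟙_ C)).inv ≫ (bng X ⊗ₘ bng X) := by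
      have := lax_dup (C := C) (bng X)
      rwa [dup_unitObj] at this
    have h2 : ((λ_ (𝟙_ C)).inv ≫ (bng X ⊗ₘ bng X)) ≫ mrg X = bng X := by
      rw [tensorHom_def']
      slice_lhs 3 4 => rw [mrg_bng_left X]
      simp [MonoidalCategory.leftUnitor_naturality]
    calc (bng X ≫ dup X) ≫ mrg X
        ≤ ((λ_ (𝟙_ C)).inv ≫ (bng X ⊗ₘ bng X)) ≫ mrg X := comp_mono h1 le_rfl
      _ = bng X := h2
  -- Step 3: Δ;∇ ≤ 1.
  have hle : dup X ≫ mrg X ≤ 𝟙 X := by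
    have key : dup X ≫ mrg X =
        (λ_ X).inv ≫ (((bng X ≫ dup X) ≫ mrg X) ▷ X) ≫ mrg X := by
      conv_lhs => rw [hdup]
      have hassoc : (X ◁ mrg X) ≫ mrg X = (α_ X X X).inv ≫ (mrg X ▷ X) ≫ mrg X := by
        rw [mrg_assoc X, Iso.inv_hom_id_assoc]
      slice_lhs 4 5 => rw [hassoc]
      slice_lhs 3 4 => rw [Iso.hom_inv_id]
      simp [comp_whiskerRight]
    rw [key]
    have hwh : (((bng X ≫ dup X) ≫ mrg X) ▷ X) ≤ (bng X ▷ X) := by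
      rw [← tensorHom_id, ← tensorHom_id]
      exact tensor_mono hcup le_rfl
    calc (λ_ X).inv ≫ (((bng X ≫ dup X) ≫ mrg X) ▷ X) ≫ mrg X
        ≤ (λ_ X).inv ≫ (bng X ▷ X) ≫ mrg X :=
          comp_mono le_rfl (comp_mono hwh le_rfl)
      _ = 𝟙 X := by rw [mrg_bng_left X, Iso.inv_hom_id]
  exact le_antisymm hle (adj_dup_unit X)
end

section
/- In a cartesian bicategory of relations, a morphism R : X ⟶ Y is a map (single-valued and total) if and only if it has a right adjoint, i.e. there exists S : Y ⟶ X with id_X ≤ R ; S and S ; R ≤ id_Y; moreover, in that case the right adjoint is R†, i.e. S = R†. -/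
open CategoryTheory MonoidalCategory

universe v u

namespace CartesianBicatRel

variable {C : Type u} [Category.{v} C] [MonoidalCategory C] [SymmetricCategory C]
  [∀ X Y : C, PartialOrder (X ⟶ Y)] [CartesianBicatRel C]

lemma whiskerLeft_mono {X Y Z : C} {f g : Y ⟶ Z} (h : f ≤ g) : X ◁ f ≤ X ◁ g := by
  simpa [MonoidalCategory.id_tensorHom] using tensor_mono (le_refl (𝟙 X)) h

lemma whiskerRight_mono {X Y Z : C} {f g : X ⟶ Y} (h : f ≤ g) : f ▷ Z ≤ g ▷ Z := by
  simpa [MonoidalCategory.tensorHom_id] using tensor_mono h (le_refl (𝟙 Z))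

/-- The snake (zig-zag) identity for the self-duality induced by the Frobenius structure. -/
lemma snake (X : C) :
    (λ_ X).inv ≫ ((bng X ≫ dup X) ▷ X) ≫ (α_ X X X).hom ≫
      (X ◁ (mrg X ≫ del X)) ≫ (ρ_ X).hom = 𝟙 X := by
  simp only [comp_whiskerRight, MonoidalCategory.whiskerLeft_comp, Category.assoc]
  rw [reassoc_of% frob_left (C := C) X, reassoc_of% mrg_bng_left (C := C) X,
    reassoc_of% dup_del_right (C := C) X]
  simp

/-- Every morphism is colax with respect to the monoid structure: multiplication. -/
lemma colax_mrg {X Y : C} (R : X ⟶ Y) : mrg X ≫ R ≤ (R ⊗ₘ R) ≫ mrg Y := by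
  calc mrg X ≫ R = mrg X ≫ R ≫ 𝟙 Y := by simp
    _ ≤ mrg X ≫ R ≫ dup Y ≫ mrg Y :=
        comp_mono le_rfl (comp_mono le_rfl (adj_dup_unit Y))
    _ = mrg X ≫ (R ≫ dup Y) ≫ mrg Y := by simp
    _ ≤ mrg X ≫ (dup X ≫ (R ⊗ₘ R)) ≫ mrg Y :=
        comp_mono le_rfl (comp_mono (lax_dup R) le_rfl)
    _ = (mrg X ≫ dup X) ≫ ((R ⊗ₘ R) ≫ mrg Y) := by simp
    _ ≤ 𝟙 (X ⊗ X) ≫ ((R ⊗ₘ R) ≫ mrg Y) := comp_mono (adj_dup_counit X) le_rfl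
    _ = (R ⊗ₘ R) ≫ mrg Y := by simp

/-- Every morphism is colax with respect to the monoid structure: unit. -/
lemma colax_bng {X Y : C} (R : X ⟶ Y) : bng X ≫ R ≤ bng Y := by
  calc bng X ≫ R = bng X ≫ R ≫ 𝟙 Y := by simp
    _ ≤ bng X ≫ R ≫ del Y ≫ bng Y :=
        comp_mono le_rfl (comp_mono le_rfl (adj_del_unit Y))
    _ = bng X ≫ (R ≫ del Y) ≫ bng Y := by simp
    _ ≤ bng X ≫ del X ≫ bng Y := comp_mono le_rfl (comp_mono (lax_del R) le_rfl)
    _ = (bng X ≫ del X) ≫ bng Y := by simp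
    _ ≤ 𝟙 (𝟙_ C) ≫ bng Y := comp_mono (adj_del_counit X) le_rfl
    _ = bng Y := by simp

lemma comp_dagger_eq {X Y : C} (R : X ⟶ Y) :
    R ≫ dagger R = (λ_ X).inv ≫ ((bng X ≫ dup X) ▷ X) ≫ (α_ X X X).hom ≫
      (X ◁ ((R ⊗ₘ R) ≫ mrg Y ≫ del Y)) ≫ (ρ_ X).hom := by
  rw [dagger, ← Category.assoc, leftUnitor_inv_naturality]
  simp only [Category.assoc]
  rw [whisker_exchange_assoc, associator_naturality_right_assoc,
    ← MonoidalCategory.whiskerLeft_comp_assoc, ← tensorHom_def']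
  simp only [MonoidalCategory.whiskerLeft_comp, Category.assoc]

lemma dagger_comp_eq {X Y : C} (R : X ⟶ Y) :
    dagger R ≫ R = (λ_ Y).inv ≫ ((bng X ≫ dup X ≫ (R ⊗ₘ R)) ▷ Y) ≫ (α_ Y Y Y).hom ≫
      (Y ◁ (mrg Y ≫ del Y)) ≫ (ρ_ Y).hom := by
  rw [dagger]
  simp only [Category.assoc]
  rw [← rightUnitor_naturality, whisker_exchange_assoc, whisker_exchange_assoc,
    ← associator_naturality_left_assoc, ← associator_naturality_middle_assoc]
  simp only [MonoidalCategory.tensorHom_def, comp_whiskerRight, Category.assoc]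

/-- A total morphism satisfies the unit inequality of the adjunction `R ⊣ R†`. -/
lemma unit_of_total {X Y : C} {R : X ⟶ Y} (hT : Total R) : 𝟙 X ≤ R ≫ dagger R := by
  rw [comp_dagger_eq]
  have h : mrg X ≫ del X ≤ (R ⊗ₘ R) ≫ mrg Y ≫ del Y := by
    calc mrg X ≫ del X ≤ mrg X ≫ R ≫ del Y := comp_mono le_rfl hT
      _ = (mrg X ≫ R) ≫ del Y := by simp
      _ ≤ ((R ⊗ₘ R) ≫ mrg Y) ≫ del Y := comp_mono (colax_mrg R) le_rfl
      _ = (R ⊗ₘ R) ≫ mrg Y ≫ del Y := by simp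
  calc 𝟙 X = (λ_ X).inv ≫ ((bng X ≫ dup X) ▷ X) ≫ (α_ X X X).hom ≫
        (X ◁ (mrg X ≫ del X)) ≫ (ρ_ X).hom := (snake X).symm
    _ ≤ _ := comp_mono le_rfl (comp_mono le_rfl (comp_mono le_rfl
        (comp_mono (whiskerLeft_mono h) le_rfl)))

/-- A single-valued morphism satisfies the counit inequality of the adjunction `R ⊣ R†`. -/
lemma counit_of_singleValued {X Y : C} {R : X ⟶ Y} (hS : SingleValued R) :
    dagger R ≫ R ≤ 𝟙 Y := by
  rw [dagger_comp_eq]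
  have h : bng X ≫ dup X ≫ (R ⊗ₘ R) ≤ bng Y ≫ dup Y := by
    calc bng X ≫ dup X ≫ (R ⊗ₘ R) ≤ bng X ≫ R ≫ dup Y := comp_mono le_rfl hS
      _ = (bng X ≫ R) ≫ dup Y := by simp
      _ ≤ bng Y ≫ dup Y := comp_mono (colax_bng R) le_rfl
  calc (λ_ Y).inv ≫ ((bng X ≫ dup X ≫ (R ⊗ₘ R)) ▷ Y) ≫ (α_ Y Y Y).hom ≫
        (Y ◁ (mrg Y ≫ del Y)) ≫ (ρ_ Y).hom
      ≤ (λ_ Y).inv ≫ ((bng Y ≫ dup Y) ▷ Y) ≫ (α_ Y Y Y).hom ≫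
        (Y ◁ (mrg Y ≫ del Y)) ≫ (ρ_ Y).hom :=
        comp_mono le_rfl (comp_mono (whiskerRight_mono h) le_rfl)
    _ = 𝟙 Y := snake Y

end CartesianBicatRel

open CartesianBicatRel in
/-- `R` is a map iff it has a right adjoint, in which case the right adjoint is `R†`. -/
theorem map_iff_right_adjoint {C : Type u} [Category.{v} C] [MonoidalCategory C]
    [SymmetricCategory C] [∀ X Y : C, PartialOrder (X ⟶ Y)] [CartesianBicatRel C]
    {X Y : C} (R : X ⟶ Y) :
    (IsMap R ↔ ∃ S : Y ⟶ X, 𝟙 X ≤ R ≫ S ∧ S ≫ R ≤ 𝟙 Y) ∧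
    (∀ S : Y ⟶ X, 𝟙 X ≤ R ≫ S → S ≫ R ≤ 𝟙 Y → S = dagger R) := by
  -- If `R` has a right adjoint `S`, then `R` is a map.
  have adj_to_map : ∀ S : Y ⟶ X, 𝟙 X ≤ R ≫ S → S ≫ R ≤ 𝟙 Y → IsMap R := by
    intro S hu hc
    constructor
    · -- single-valued
      calc dup X ≫ (R ⊗ₘ R) = 𝟙 X ≫ dup X ≫ (R ⊗ₘ R) := by simp
        _ ≤ (R ≫ S) ≫ dup X ≫ (R ⊗ₘ R) := comp_mono hu le_rfl
        _ = R ≫ (S ≫ dup X) ≫ (R ⊗ₘ R) := by simp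
        _ ≤ R ≫ (dup Y ≫ (S ⊗ₘ S)) ≫ (R ⊗ₘ R) :=
            comp_mono le_rfl (comp_mono (lax_dup S) le_rfl)
        _ = R ≫ dup Y ≫ ((S ≫ R) ⊗ₘ (S ≫ R)) := by
            simp [← MonoidalCategory.tensorHom_comp_tensorHom]
        _ ≤ R ≫ dup Y ≫ (𝟙 Y ⊗ₘ 𝟙 Y) :=
            comp_mono le_rfl (comp_mono le_rfl (tensor_mono hc hc))
        _ = R ≫ dup Y := by simp
    · -- total
      calc del X = 𝟙 X ≫ del X := by simp
        _ ≤ (R ≫ S) ≫ del X := comp_mono hu le_rfl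
        _ = R ≫ S ≫ del X := by simp
        _ ≤ R ≫ del Y := comp_mono le_rfl (lax_del S)
  -- If `R` is a map, its dagger is a right adjoint.
  have map_to_adj : IsMap R → 𝟙 X ≤ R ≫ dagger R ∧ dagger R ≫ R ≤ 𝟙 Y := by
    intro h
    exact ⟨unit_of_total h.2, counit_of_singleValued h.1⟩
  refine ⟨⟨fun h => ⟨dagger R, map_to_adj h⟩, fun ⟨S, hu, hc⟩ => adj_to_map S hu hc⟩,
    fun S hu hc => ?_⟩
  obtain ⟨hu', hc'⟩ := map_to_adj (adj_to_map S hu hc)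
  apply le_antisymm
  · calc S = S ≫ 𝟙 X := by simp
      _ ≤ S ≫ R ≫ dagger R := comp_mono le_rfl hu'
      _ = (S ≫ R) ≫ dagger R := by simp
      _ ≤ 𝟙 Y ≫ dagger R := comp_mono hc le_rfl
      _ = dagger R := by simp
  · calc dagger R = dagger R ≫ 𝟙 X := by simp
      _ ≤ dagger R ≫ R ≫ S := comp_mono le_rfl hu
      _ = (dagger R ≫ R) ≫ S := by simp
      _ ≤ 𝟙 Y ≫ S := comp_mono hc' le_rfl
      _ = S := by simp
end

section
/- In a cartesian bicategory of relations, if R, S : X ⟶ Y are both maps (single-valued and total) and R ≤ S, then R = S. -/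
open CategoryTheory MonoidalCategory

universe v u

section Aux
open CartesianBicatRel MonoidalCategory

variable {C : Type u} [Category.{v} C] [MonoidalCategory C] [SymmetricCategory C]
  [∀ X Y : C, PartialOrder (X ⟶ Y)] [CartesianBicatRel C]

lemma my_whiskerLeft_mono {X Y Z : C} {f g : Y ⟶ Z} (h : f ≤ g) : X ◁ f ≤ X ◁ g := by
  simpa only [MonoidalCategory.id_tensorHom] using tensor_mono (le_refl (𝟙 X)) h

lemma my_whiskerRight_mono {X Y : C} {f g : X ⟶ Y} (Z : C) (h : f ≤ g) : f ▷ Z ≤ g ▷ Z := by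
  simpa only [MonoidalCategory.tensorHom_id] using tensor_mono h (le_refl (𝟙 Z))

/-- The snake identity, from Frobenius plus the (co)unit laws. -/
lemma my_snake (X : C) :
    (λ_ X).inv ≫ ((bng X ≫ dup X) ▷ X) ≫ (α_ X X X).hom ≫ (X ◁ (mrg X ≫ del X)) ≫
      (ρ_ X).hom = 𝟙 X := by
  calc (λ_ X).inv ≫ ((bng X ≫ dup X) ▷ X) ≫ (α_ X X X).hom ≫ (X ◁ (mrg X ≫ del X)) ≫ (ρ_ X).hom
      = (λ_ X).inv ≫ (bng X ▷ X) ≫ ((dup X ▷ X) ≫ (α_ X X X).hom ≫ (X ◁ mrg X)) ≫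
          ((X ◁ del X) ≫ (ρ_ X).hom) := by
        simp only [comp_whiskerRight, MonoidalCategory.whiskerLeft_comp, Category.assoc]
    _ = (λ_ X).inv ≫ (bng X ▷ X) ≫ (mrg X ≫ dup X) ≫ ((X ◁ del X) ≫ (ρ_ X).hom) := by
        rw [frob_left]
    _ = (λ_ X).inv ≫ (bng X ▷ X) ≫ mrg X ≫ (dup X ≫ (X ◁ del X)) ≫ (ρ_ X).hom := by
        simp only [Category.assoc]
    _ = (λ_ X).inv ≫ ((bng X ▷ X) ≫ mrg X) ≫ (ρ_ X).inv ≫ (ρ_ X).hom := by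
        rw [dup_del_right]; simp only [Category.assoc]
    _ = 𝟙 X := by rw [mrg_bng_left]; simp

lemma my_mrg_comp_le {X Y : C} (R : X ⟶ Y) : mrg X ≫ R ≤ (R ⊗ₘ R) ≫ mrg Y := by
  calc mrg X ≫ R = (mrg X ≫ R) ≫ 𝟙 Y := by simp
    _ ≤ (mrg X ≫ R) ≫ (dup Y ≫ mrg Y) := comp_mono le_rfl (adj_dup_unit Y)
    _ = mrg X ≫ (R ≫ dup Y) ≫ mrg Y := by simp
    _ ≤ mrg X ≫ (dup X ≫ (R ⊗ₘ R)) ≫ mrg Y :=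
        comp_mono le_rfl (comp_mono (lax_dup R) le_rfl)
    _ = (mrg X ≫ dup X) ≫ ((R ⊗ₘ R) ≫ mrg Y) := by simp
    _ ≤ 𝟙 (X ⊗ X) ≫ ((R ⊗ₘ R) ≫ mrg Y) := comp_mono (adj_dup_counit X) le_rfl
    _ = (R ⊗ₘ R) ≫ mrg Y := by simp

lemma my_bng_comp_le {X Y : C} (S : X ⟶ Y) : bng X ≫ S ≤ bng Y := by
  calc bng X ≫ S = (bng X ≫ S) ≫ 𝟙 Y := by simp
    _ ≤ (bng X ≫ S) ≫ (del Y ≫ bng Y) := comp_mono le_rfl (adj_del_unit Y)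
    _ = bng X ≫ (S ≫ del Y) ≫ bng Y := by simp
    _ ≤ bng X ≫ del X ≫ bng Y := comp_mono le_rfl (comp_mono (lax_del S) le_rfl)
    _ = (bng X ≫ del X) ≫ bng Y := by simp
    _ ≤ 𝟙 (𝟙_ C) ≫ bng Y := comp_mono (adj_del_counit X) le_rfl
    _ = bng Y := by simp

lemma my_comp_dagger_eq {X Y : C} (R : X ⟶ Y) :
    R ≫ dagger R = (λ_ X).inv ≫ ((bng X ≫ dup X) ▷ X) ≫ (α_ X X X).hom ≫
      (X ◁ ((R ⊗ₘ R) ≫ mrg Y ≫ del Y)) ≫ (ρ_ X).hom := by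
  rw [dagger]
  simp only [comp_whiskerRight, MonoidalCategory.whiskerLeft_comp, Category.assoc]
  rw [leftUnitor_inv_naturality_assoc, whisker_exchange_assoc, whisker_exchange_assoc,
    associator_naturality_right_assoc, ← MonoidalCategory.whiskerLeft_comp_assoc,
    ← tensorHom_def']

lemma my_dagger_comp_eq {X Y : C} (S : X ⟶ Y) :
    dagger S ≫ S = (λ_ Y).inv ≫ ((bng X ≫ dup X ≫ (S ⊗ₘ S)) ▷ Y) ≫ (α_ Y Y Y).hom ≫
      (Y ◁ (mrg Y ≫ del Y)) ≫ (ρ_ Y).hom := by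
  rw [dagger]
  simp only [comp_whiskerRight, MonoidalCategory.whiskerLeft_comp, Category.assoc]
  rw [← rightUnitor_naturality, whisker_exchange_assoc, whisker_exchange_assoc,
    whisker_exchange_assoc, ← associator_naturality_left_assoc,
    ← associator_naturality_middle_assoc, ← comp_whiskerRight_assoc (S ▷ X) (Y ◁ S) Y,
    ← MonoidalCategory.tensorHom_def]

lemma my_one_le_comp_dagger {X Y : C} {R : X ⟶ Y} (hT : Total R) :
    𝟙 X ≤ R ≫ dagger R := by
  have h1 : mrg X ≫ del X ≤ (R ⊗ₘ R) ≫ mrg Y ≫ del Y := by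
    calc mrg X ≫ del X ≤ mrg X ≫ (R ≫ del Y) := comp_mono le_rfl hT
      _ = (mrg X ≫ R) ≫ del Y := by simp
      _ ≤ ((R ⊗ₘ R) ≫ mrg Y) ≫ del Y := comp_mono (my_mrg_comp_le R) le_rfl
      _ = (R ⊗ₘ R) ≫ mrg Y ≫ del Y := by simp
  calc 𝟙 X = (λ_ X).inv ≫ ((bng X ≫ dup X) ▷ X) ≫ (α_ X X X).hom ≫
        (X ◁ (mrg X ≫ del X)) ≫ (ρ_ X).hom := (my_snake X).symm
    _ ≤ (λ_ X).inv ≫ ((bng X ≫ dup X) ▷ X) ≫ (α_ X X X).hom ≫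
        (X ◁ ((R ⊗ₘ R) ≫ mrg Y ≫ del Y)) ≫ (ρ_ X).hom :=
      comp_mono le_rfl (comp_mono le_rfl (comp_mono le_rfl
        (comp_mono (my_whiskerLeft_mono h1) le_rfl)))
    _ = R ≫ dagger R := (my_comp_dagger_eq R).symm

lemma my_dagger_comp_le_one {X Y : C} {S : X ⟶ Y} (hSV : SingleValued S) :
    dagger S ≫ S ≤ 𝟙 Y := by
  have h2 : bng X ≫ dup X ≫ (S ⊗ₘ S) ≤ bng Y ≫ dup Y := by
    calc bng X ≫ dup X ≫ (S ⊗ₘ S) ≤ bng X ≫ S ≫ dup Y := comp_mono le_rfl hSV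
      _ = (bng X ≫ S) ≫ dup Y := by simp
      _ ≤ bng Y ≫ dup Y := comp_mono (my_bng_comp_le S) le_rfl
  calc dagger S ≫ S = (λ_ Y).inv ≫ ((bng X ≫ dup X ≫ (S ⊗ₘ S)) ▷ Y) ≫ (α_ Y Y Y).hom ≫
        (Y ◁ (mrg Y ≫ del Y)) ≫ (ρ_ Y).hom := my_dagger_comp_eq S
    _ ≤ (λ_ Y).inv ≫ ((bng Y ≫ dup Y) ▷ Y) ≫ (α_ Y Y Y).hom ≫
        (Y ◁ (mrg Y ≫ del Y)) ≫ (ρ_ Y).hom :=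
      comp_mono le_rfl (comp_mono (my_whiskerRight_mono Y h2) le_rfl)
    _ = 𝟙 Y := my_snake Y

lemma my_dagger_mono {X Y : C} {R S : X ⟶ Y} (h : R ≤ S) : dagger R ≤ dagger S := by
  rw [dagger, dagger]
  exact comp_mono le_rfl (comp_mono le_rfl (comp_mono le_rfl
    (comp_mono (my_whiskerLeft_mono (my_whiskerRight_mono Y h)) le_rfl)))

end Aux

open CartesianBicatRel in
/-- Comparable maps are equal. -/
theorem maps_le_eq {C : Type u} [Category.{v} C] [MonoidalCategory C]
    [SymmetricCategory C] [∀ X Y : C, PartialOrder (X ⟶ Y)] [CartesianBicatRel C]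
    {X Y : C} (R S : X ⟶ Y) (hR : IsMap R) (hS : IsMap S) (h : R ≤ S) : R = S := by
  refine le_antisymm h ?_
  calc S = 𝟙 X ≫ S := by simp
    _ ≤ (R ≫ dagger R) ≫ S := comp_mono (my_one_le_comp_dagger hR.2) le_rfl
    _ ≤ (R ≫ dagger S) ≫ S := comp_mono (comp_mono le_rfl (my_dagger_mono h)) le_rfl
    _ = R ≫ (dagger S ≫ S) := by simp
    _ ≤ R ≫ 𝟙 Y := comp_mono le_rfl (my_dagger_comp_le_one hS.1)
    _ = R := by simp
end

section
/- In a cartesian bicategory of relations, for any morphism R : X ⟶ Y: (span cancellation) R is single-valued and surjective if and only if R† ; R = id_Y; and (cospan cancellation) R is injective and total if and only if R ; R† = id_X. -/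
open CategoryTheory MonoidalCategory

universe v u

namespace SpanCospanAux

set_option linter.unusedSectionVars false

open CartesianBicatRel

variable {C : Type u} [Category.{v} C] [MonoidalCategory C] [SymmetricCategory C]
  [∀ X Y : C, PartialOrder (X ⟶ Y)] [CartesianBicatRel C]

/-- cup `η_X = ?;Δ` -/
def cup (X : C) : 𝟙_ C ⟶ X ⊗ X := bng X ≫ dup X
/-- cap `ε_X = ∇;!` -/
def cap (X : C) : X ⊗ X ⟶ 𝟙_ C := mrg X ≫ del X

lemma wr_mono {A B : C} {f g : A ⟶ B} (h : f ≤ g) (Z : C) : f ▷ Z ≤ g ▷ Z := by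
  simpa only [MonoidalCategory.tensorHom_id] using tensor_mono h (le_refl (𝟙 Z))

lemma wl_mono (Z : C) {A B : C} {f g : A ⟶ B} (h : f ≤ g) : Z ◁ f ≤ Z ◁ g := by
  simpa only [MonoidalCategory.id_tensorHom] using tensor_mono (le_refl (𝟙 Z)) h

variable {X Y : C}

lemma bng_comp_le (R : X ⟶ Y) : bng X ≫ R ≤ bng Y := by
  calc bng X ≫ R = (bng X ≫ R) ≫ 𝟙 Y := by simp
    _ ≤ (bng X ≫ R) ≫ (del Y ≫ bng Y) := comp_mono le_rfl (adj_del_unit Y)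
    _ = bng X ≫ (R ≫ del Y) ≫ bng Y := by simp
    _ ≤ bng X ≫ del X ≫ bng Y := comp_mono le_rfl (comp_mono (lax_del R) le_rfl)
    _ = (bng X ≫ del X) ≫ bng Y := by simp
    _ ≤ 𝟙 (𝟙_ C) ≫ bng Y := comp_mono (adj_del_counit X) le_rfl
    _ = bng Y := by simp

lemma mrg_oplax (R : X ⟶ Y) : mrg X ≫ R ≤ (R ⊗ₘ R) ≫ mrg Y := by
  calc mrg X ≫ R = (mrg X ≫ R) ≫ 𝟙 Y := by simp
    _ ≤ (mrg X ≫ R) ≫ (dup Y ≫ mrg Y) := comp_mono le_rfl (adj_dup_unit Y)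
    _ = mrg X ≫ (R ≫ dup Y) ≫ mrg Y := by simp
    _ ≤ mrg X ≫ (dup X ≫ (R ⊗ₘ R)) ≫ mrg Y := comp_mono le_rfl (comp_mono (lax_dup R) le_rfl)
    _ = (mrg X ≫ dup X) ≫ ((R ⊗ₘ R) ≫ mrg Y) := by simp
    _ ≤ 𝟙 (X ⊗ X) ≫ ((R ⊗ₘ R) ≫ mrg Y) := comp_mono (adj_dup_counit X) le_rfl
    _ = (R ⊗ₘ R) ≫ mrg Y := by simp

lemma dup_le_cup : dup X ≤ del X ≫ cup X := by
  calc dup X = 𝟙 X ≫ dup X := by simp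
    _ ≤ (del X ≫ bng X) ≫ dup X := comp_mono (adj_del_unit X) le_rfl
    _ = del X ≫ cup X := by simp [cup]

lemma mrg_le_cap : mrg X ≤ cap X ≫ bng X := by
  calc mrg X = mrg X ≫ 𝟙 X := by simp
    _ ≤ mrg X ≫ (del X ≫ bng X) := comp_mono le_rfl (adj_del_unit X)
    _ = cap X ≫ bng X := by simp [cap]

lemma cupfrob (X : C) :
    (λ_ X).inv ≫ (cup X ▷ X) ≫ (α_ X X X).hom ≫ (X ◁ mrg X) = dup X := by
  calc (λ_ X).inv ≫ (cup X ▷ X) ≫ (α_ X X X).hom ≫ (X ◁ mrg X)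
      = (λ_ X).inv ≫ (bng X ▷ X) ≫ ((dup X ▷ X) ≫ (α_ X X X).hom ≫ (X ◁ mrg X)) := by
        simp [cup]
    _ = (λ_ X).inv ≫ (bng X ▷ X) ≫ (mrg X ≫ dup X) := by rw [frob_left]
    _ = (λ_ X).inv ≫ ((bng X ▷ X) ≫ mrg X) ≫ dup X := by simp
    _ = dup X := by rw [mrg_bng_left]; simp

lemma snake (X : C) :
    (λ_ X).inv ≫ (cup X ▷ X) ≫ (α_ X X X).hom ≫ (X ◁ cap X) ≫ (ρ_ X).hom = 𝟙 X := by
  calc (λ_ X).inv ≫ (cup X ▷ X) ≫ (α_ X X X).hom ≫ (X ◁ cap X) ≫ (ρ_ X).hom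
      = ((λ_ X).inv ≫ (cup X ▷ X) ≫ (α_ X X X).hom ≫ (X ◁ mrg X)) ≫
          (X ◁ del X) ≫ (ρ_ X).hom := by
        simp [cap, MonoidalCategory.whiskerLeft_comp]
    _ = (dup X ≫ (X ◁ del X)) ≫ (ρ_ X).hom := by rw [cupfrob]; simp
    _ = 𝟙 X := by rw [dup_del_right]; simp

lemma mrg_exp (Y : C) :
    mrg Y = (dup Y ▷ Y) ≫ (α_ Y Y Y).hom ≫ (Y ◁ mrg Y) ≫ (Y ◁ del Y) ≫ (ρ_ Y).hom := by
  symm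
  slice_lhs 1 3 => rw [frob_left]
  slice_lhs 2 3 => rw [dup_del_right]
  simp

lemma mirror {A B Y : C} (n : 𝟙_ C ⟶ A ⊗ B) (c : B ⊗ Y ⟶ 𝟙_ C) :
    (λ_ Y).inv ≫ (n ▷ Y) ≫ (α_ A B Y).hom ≫ (A ◁ c) ≫ (ρ_ A).hom =
      (ρ_ Y).inv ≫ (Y ◁ (n ≫ (β_ A B).hom)) ≫ (α_ Y B A).inv ≫
        (((β_ Y B).hom ≫ c) ▷ A) ≫ (λ_ A).hom := by
  have hmid : (λ_ Y).inv ≫ (n ▷ Y) ≫ (α_ A B Y).hom ≫ (A ◁ c) ≫ (ρ_ A).hom =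
      (λ_ Y).inv ≫ (n ▷ Y) ≫ (α_ A B Y).hom ≫ (β_ A (B ⊗ Y)).hom ≫ (c ▷ A) ≫ (λ_ A).hom := by
    conv_rhs => rw [← BraidedCategory.braiding_naturality_right_assoc A c,
      braiding_leftUnitor]
  rw [hmid]
  have h1 : (ρ_ Y).inv ≫ (Y ◁ (n ≫ (β_ A B).hom)) =
      (λ_ Y).inv ≫ ((n ≫ (β_ A B).hom) ▷ Y) ≫ (β_ (B ⊗ A) Y).hom := by
    rw [BraidedCategory.braiding_naturality_left (n ≫ (β_ A B).hom) Y,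
      braiding_tensorUnit_left]
    simp
  rw [reassoc_of% h1]
  simp only [BraidedCategory.braiding_tensor_left_hom, BraidedCategory.braiding_tensor_right_hom,
    comp_whiskerRight, Category.assoc, Iso.hom_inv_id_assoc, Iso.inv_hom_id_assoc]
  slice_rhs 7 8 => rw [← comp_whiskerRight, SymmetricCategory.symmetry]
  simp

/-- `blk R` : the mirrored form of `dagger R`, with the cup created on the right. -/
def blk {X Y : C} (R : X ⟶ Y) : Y ⟶ X :=
  (ρ_ Y).inv ≫ (Y ◁ (cup X ≫ (R ▷ X))) ≫ (α_ Y Y X).inv ≫ (cap Y ▷ X) ≫ (λ_ X).hom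

lemma dagger_nform (R : X ⟶ Y) :
    dagger R = (λ_ Y).inv ≫ ((cup X ≫ (X ◁ R)) ▷ Y) ≫ (α_ X Y Y).hom ≫
      (X ◁ cap Y) ≫ (ρ_ X).hom := by
  simp only [dagger, cup, cap, comp_whiskerRight, MonoidalCategory.whiskerLeft_comp,
    Category.assoc]
  monoidal

lemma dagger_blk (R : X ⟶ Y) : dagger R = blk R := by
  have h2 : cup X ≫ (X ◁ R) ≫ (β_ X Y).hom = cup X ≫ (R ▷ X) := by
    rw [BraidedCategory.braiding_naturality_right, cup]
    simp only [Category.assoc]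
    rw [reassoc_of% (dup_cocomm X)]
  have h3 : (β_ Y Y).hom ≫ cap Y = cap Y := by
    rw [cap, ← Category.assoc, mrg_comm]
  rw [dagger_nform, mirror (cup X ≫ (X ◁ R)) (cap Y), h3, blk]
  simp only [Category.assoc, h2]

lemma E1 (R : X ⟶ Y) :
    dagger R ≫ R = (λ_ Y).inv ≫ ((cup X ≫ (R ⊗ₘ R)) ▷ Y) ≫ (α_ Y Y Y).hom ≫
      (Y ◁ cap Y) ≫ (ρ_ Y).hom := by
  simp only [dagger, cup, cap, MonoidalCategory.tensorHom_def, comp_whiskerRight,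
    MonoidalCategory.whiskerLeft_comp, Category.assoc]
  rw [← rightUnitor_naturality]
  rw [whisker_exchange_assoc]
  rw [whisker_exchange_assoc]
  rw [whisker_exchange_assoc]
  monoidal

lemma E2 (R : X ⟶ Y) :
    R ≫ dagger R = (λ_ X).inv ≫ (cup X ▷ X) ≫ (α_ X X X).hom ≫
      (X ◁ ((R ⊗ₘ R) ≫ cap Y)) ≫ (ρ_ X).hom := by
  simp only [dagger, cup, cap, MonoidalCategory.tensorHom_def', comp_whiskerRight,
    MonoidalCategory.whiskerLeft_comp, Category.assoc]
  rw [leftUnitor_inv_naturality_assoc]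
  rw [whisker_exchange_assoc]
  rw [whisker_exchange_assoc]
  monoidal


lemma E3a (R : X ⟶ Y) :
    (ρ_ Y).inv ≫ (Y ◁ (cup X ≫ (R ▷ X))) ≫ (α_ Y Y X).inv ≫ (mrg Y ▷ X) =
      dup Y ≫ (Y ◁ blk R) := by
  conv_lhs => rw [mrg_exp Y]
  simp only [comp_whiskerRight, Category.assoc]
  rw [← associator_inv_naturality_left_assoc]
  rw [whisker_exchange_assoc]
  rw [← rightUnitor_inv_naturality_assoc]
  rw [blk, cap]
  simp only [MonoidalCategory.whiskerLeft_comp, Category.assoc]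
  monoidal

lemma T3_eq (R : X ⟶ Y) :
    (ρ_ X).inv ≫ (X ◁ cup X) ≫ (α_ X X X).inv ≫ ((R ⊗ₘ R) ▷ X) ≫ (mrg Y ▷ X) =
      R ≫ (ρ_ Y).inv ≫ (Y ◁ (cup X ≫ (R ▷ X))) ≫ (α_ Y Y X).inv ≫ (mrg Y ▷ X) := by
  rw [rightUnitor_inv_naturality_assoc]
  rw [← whisker_exchange_assoc]
  rw [MonoidalCategory.whiskerLeft_comp]
  simp only [Category.assoc]
  rw [associator_inv_naturality_left_assoc]
  rw [associator_inv_naturality_middle_assoc]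
  rw [MonoidalCategory.tensorHom_def]
  simp only [comp_whiskerRight, Category.assoc]
  rw [← comp_whiskerRight_assoc, ← whisker_exchange, comp_whiskerRight_assoc]

lemma cupfrobR (R : X ⟶ Y) :
    (λ_ X).inv ≫ ((cup X ≫ (R ▷ X)) ▷ X) ≫ (α_ Y X X).hom ≫ (Y ◁ mrg X) =
      dup X ≫ (R ▷ X) := by
  simp only [comp_whiskerRight, Category.assoc]
  rw [associator_naturality_left_assoc]
  rw [← whisker_exchange]
  conv_rhs => rw [← cupfrob X]
  simp only [Category.assoc]

lemma E4' (R : X ⟶ Y) :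
    (blk R ▷ X) ≫ mrg X =
      (Y ◁ (dup X ≫ (R ▷ X))) ≫ (α_ Y Y X).inv ≫ (cap Y ▷ X) ≫ (λ_ X).hom := by
  conv_rhs => rw [← cupfrobR R]
  rw [blk, cap]
  simp only [comp_whiskerRight, MonoidalCategory.whiskerLeft_comp, Category.assoc]
  rw [associator_inv_naturality_right_assoc]
  rw [whisker_exchange_assoc]
  rw [whisker_exchange_assoc]
  rw [leftUnitor_naturality]
  monoidal

lemma dup_coassoc' (X : C) :
    dup X ≫ (dup X ▷ X) = dup X ≫ (X ◁ dup X) ≫ (α_ X X X).inv := by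
  rw [← Category.assoc, ← dup_coassoc]; simp

lemma mrg_assoc' (X : C) :
    (X ◁ mrg X) ≫ mrg X = (α_ X X X).inv ≫ (mrg X ▷ X) ≫ mrg X := by
  rw [mrg_assoc]; simp

lemma K (R : X ⟶ Y) : dup X ≫ (R ▷ X) ≤ R ≫ dup Y ≫ (Y ◁ dagger R) := by
  calc dup X ≫ (R ▷ X)
      = dup X ≫ ((R ≫ 𝟙 Y) ▷ X) := by simp
    _ ≤ dup X ≫ ((R ≫ dup Y ≫ mrg Y) ▷ X) :=
        comp_mono le_rfl (wr_mono (comp_mono le_rfl (adj_dup_unit Y)) X)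
    _ ≤ dup X ≫ (((dup X ≫ (R ⊗ₘ R)) ≫ mrg Y) ▷ X) := by
        refine comp_mono le_rfl (wr_mono ?_ X)
        calc R ≫ dup Y ≫ mrg Y = (R ≫ dup Y) ≫ mrg Y := by simp
          _ ≤ (dup X ≫ (R ⊗ₘ R)) ≫ mrg Y := comp_mono (lax_dup R) le_rfl
    _ = dup X ≫ (dup X ▷ X) ≫ (((R ⊗ₘ R) ≫ mrg Y) ▷ X) := by
        simp only [comp_whiskerRight, Category.assoc]
    _ = dup X ≫ (X ◁ dup X) ≫ (α_ X X X).inv ≫ (((R ⊗ₘ R) ≫ mrg Y) ▷ X) := by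
        rw [reassoc_of% (dup_coassoc' X)]
    _ ≤ dup X ≫ (X ◁ (del X ≫ cup X)) ≫ (α_ X X X).inv ≫ (((R ⊗ₘ R) ≫ mrg Y) ▷ X) :=
        comp_mono le_rfl (comp_mono (wl_mono X dup_le_cup) le_rfl)
    _ = (ρ_ X).inv ≫ (X ◁ cup X) ≫ (α_ X X X).inv ≫ ((R ⊗ₘ R) ▷ X) ≫ (mrg Y ▷ X) := by
        simp only [MonoidalCategory.whiskerLeft_comp, comp_whiskerRight, Category.assoc]
        rw [reassoc_of% (dup_del_right X)]
    _ = R ≫ (ρ_ Y).inv ≫ (Y ◁ (cup X ≫ (R ▷ X))) ≫ (α_ Y Y X).inv ≫ (mrg Y ▷ X) :=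
        T3_eq R
    _ = R ≫ dup Y ≫ (Y ◁ blk R) := by rw [E3a]
    _ = R ≫ dup Y ≫ (Y ◁ dagger R) := by rw [dagger_blk]

lemma K2 (R : X ⟶ Y) : (Y ◁ R) ≫ mrg Y ≤ (dagger R ▷ X) ≫ mrg X ≫ R := by
  calc (Y ◁ R) ≫ mrg Y
      = (Y ◁ (𝟙 X ≫ R)) ≫ mrg Y := by simp
    _ ≤ (Y ◁ ((dup X ≫ mrg X) ≫ R)) ≫ mrg Y :=
        comp_mono (wl_mono Y (comp_mono (adj_dup_unit X) le_rfl)) le_rfl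
    _ ≤ (Y ◁ (dup X ≫ ((R ⊗ₘ R) ≫ mrg Y))) ≫ mrg Y := by
        refine comp_mono (wl_mono Y ?_) le_rfl
        calc (dup X ≫ mrg X) ≫ R = dup X ≫ (mrg X ≫ R) := by simp
          _ ≤ dup X ≫ ((R ⊗ₘ R) ≫ mrg Y) := comp_mono le_rfl (mrg_oplax R)
    _ = (Y ◁ (dup X ≫ (R ⊗ₘ R))) ≫ (α_ Y Y Y).inv ≫ (mrg Y ▷ Y) ≫ mrg Y := by
        simp only [MonoidalCategory.whiskerLeft_comp, Category.assoc]
        rw [mrg_assoc' Y]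
    _ ≤ (Y ◁ (dup X ≫ (R ⊗ₘ R))) ≫ (α_ Y Y Y).inv ≫ ((cap Y ≫ bng Y) ▷ Y) ≫ mrg Y :=
        comp_mono le_rfl (comp_mono le_rfl (comp_mono (wr_mono mrg_le_cap Y) le_rfl))
    _ = (Y ◁ (dup X ≫ (R ⊗ₘ R))) ≫ (α_ Y Y Y).inv ≫ (cap Y ▷ Y) ≫ (λ_ Y).hom := by
        simp only [comp_whiskerRight, Category.assoc]
        rw [mrg_bng_left]
    _ = ((Y ◁ (dup X ≫ (R ▷ X))) ≫ (α_ Y Y X).inv ≫ (cap Y ▷ X) ≫ (λ_ X).hom) ≫ R := by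
        rw [MonoidalCategory.tensorHom_def]
        simp only [MonoidalCategory.whiskerLeft_comp, Category.assoc]
        rw [associator_inv_naturality_right_assoc]
        rw [whisker_exchange_assoc]
        rw [leftUnitor_naturality]
    _ = (blk R ▷ X) ≫ mrg X ≫ R := by rw [← E4']; simp only [Category.assoc]
    _ = (dagger R ▷ X) ≫ mrg X ≫ R := by rw [dagger_blk]

lemma span_iff (R : X ⟶ Y) :
    (SingleValued R ∧ Surjective R) ↔ dagger R ≫ R = 𝟙 Y := by
  constructor
  · rintro ⟨hsv, hsurj⟩
    apply le_antisymm
    · have hcup : cup X ≫ (R ⊗ₘ R) ≤ cup Y := by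
        calc cup X ≫ (R ⊗ₘ R) = bng X ≫ (dup X ≫ (R ⊗ₘ R)) := by simp [cup]
          _ ≤ bng X ≫ (R ≫ dup Y) := comp_mono le_rfl hsv
          _ = (bng X ≫ R) ≫ dup Y := by simp
          _ ≤ bng Y ≫ dup Y := comp_mono (bng_comp_le R) le_rfl
          _ = cup Y := rfl
      calc dagger R ≫ R
          = (λ_ Y).inv ≫ ((cup X ≫ (R ⊗ₘ R)) ▷ Y) ≫ (α_ Y Y Y).hom ≫
            (Y ◁ cap Y) ≫ (ρ_ Y).hom := E1 R
        _ ≤ (λ_ Y).inv ≫ (cup Y ▷ Y) ≫ (α_ Y Y Y).hom ≫ (Y ◁ cap Y) ≫ (ρ_ Y).hom :=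
            comp_mono le_rfl (comp_mono (wr_mono hcup Y) le_rfl)
        _ = 𝟙 Y := snake Y
    · have hcup : cup Y ≤ cup X ≫ (R ⊗ₘ R) := by
        calc cup Y = bng Y ≫ dup Y := rfl
          _ ≤ (bng X ≫ R) ≫ dup Y := comp_mono hsurj le_rfl
          _ = bng X ≫ (R ≫ dup Y) := by simp
          _ ≤ bng X ≫ (dup X ≫ (R ⊗ₘ R)) := comp_mono le_rfl (lax_dup R)
          _ = cup X ≫ (R ⊗ₘ R) := by simp [cup]
      calc 𝟙 Y
          = (λ_ Y).inv ≫ (cup Y ▷ Y) ≫ (α_ Y Y Y).hom ≫ (Y ◁ cap Y) ≫ (ρ_ Y).hom :=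
            (snake Y).symm
        _ ≤ (λ_ Y).inv ≫ ((cup X ≫ (R ⊗ₘ R)) ▷ Y) ≫ (α_ Y Y Y).hom ≫
            (Y ◁ cap Y) ≫ (ρ_ Y).hom :=
            comp_mono le_rfl (comp_mono (wr_mono hcup Y) le_rfl)
        _ = dagger R ≫ R := (E1 R).symm
  · intro h
    constructor
    · show dup X ≫ (R ⊗ₘ R) ≤ R ≫ dup Y
      calc dup X ≫ (R ⊗ₘ R) = (dup X ≫ (R ▷ X)) ≫ (Y ◁ R) := by
            rw [MonoidalCategory.tensorHom_def]; simp only [Category.assoc]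
        _ ≤ (R ≫ dup Y ≫ (Y ◁ dagger R)) ≫ (Y ◁ R) := comp_mono (K R) le_rfl
        _ = R ≫ dup Y ≫ (Y ◁ (dagger R ≫ R)) := by
            simp only [MonoidalCategory.whiskerLeft_comp, Category.assoc]
        _ = R ≫ dup Y := by rw [h]; simp
    · show bng Y ≤ bng X ≫ R
      calc bng Y = bng Y ≫ dagger R ≫ R := by rw [h, Category.comp_id]
        _ = (bng Y ≫ dagger R) ≫ R := by simp
        _ ≤ bng X ≫ R := comp_mono (bng_comp_le (dagger R)) le_rfl

lemma cospan_iff (R : X ⟶ Y) :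
    (CartesianBicatRel.Injective R ∧ Total R) ↔ R ≫ dagger R = 𝟙 X := by
  constructor
  · rintro ⟨hinj, htot⟩
    apply le_antisymm
    · have hcap : (R ⊗ₘ R) ≫ cap Y ≤ cap X := by
        calc (R ⊗ₘ R) ≫ cap Y = ((R ⊗ₘ R) ≫ mrg Y) ≫ del Y := by simp [cap]
          _ ≤ (mrg X ≫ R) ≫ del Y := comp_mono hinj le_rfl
          _ = mrg X ≫ (R ≫ del Y) := by simp
          _ ≤ mrg X ≫ del X := comp_mono le_rfl (lax_del R)
          _ = cap X := rfl
      calc R ≫ dagger R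
          = (λ_ X).inv ≫ (cup X ▷ X) ≫ (α_ X X X).hom ≫
            (X ◁ ((R ⊗ₘ R) ≫ cap Y)) ≫ (ρ_ X).hom := E2 R
        _ ≤ (λ_ X).inv ≫ (cup X ▷ X) ≫ (α_ X X X).hom ≫ (X ◁ cap X) ≫ (ρ_ X).hom :=
            comp_mono le_rfl (comp_mono le_rfl (comp_mono le_rfl
              (comp_mono (wl_mono X hcap) le_rfl)))
        _ = 𝟙 X := snake X
    · have hcap : cap X ≤ (R ⊗ₘ R) ≫ cap Y := by
        calc cap X = mrg X ≫ del X := rfl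
          _ ≤ mrg X ≫ (R ≫ del Y) := comp_mono le_rfl htot
          _ = (mrg X ≫ R) ≫ del Y := by simp
          _ ≤ ((R ⊗ₘ R) ≫ mrg Y) ≫ del Y := comp_mono (mrg_oplax R) le_rfl
          _ = (R ⊗ₘ R) ≫ cap Y := by simp [cap]
      calc 𝟙 X
          = (λ_ X).inv ≫ (cup X ▷ X) ≫ (α_ X X X).hom ≫ (X ◁ cap X) ≫ (ρ_ X).hom :=
            (snake X).symm
        _ ≤ (λ_ X).inv ≫ (cup X ▷ X) ≫ (α_ X X X).hom ≫
            (X ◁ ((R ⊗ₘ R) ≫ cap Y)) ≫ (ρ_ X).hom :=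
            comp_mono le_rfl (comp_mono le_rfl (comp_mono le_rfl
              (comp_mono (wl_mono X hcap) le_rfl)))
        _ = R ≫ dagger R := (E2 R).symm
  · intro h
    constructor
    · show (R ⊗ₘ R) ≫ mrg Y ≤ mrg X ≫ R
      calc (R ⊗ₘ R) ≫ mrg Y = (R ▷ X) ≫ ((Y ◁ R) ≫ mrg Y) := by
            rw [MonoidalCategory.tensorHom_def]; simp only [Category.assoc]
        _ ≤ (R ▷ X) ≫ ((dagger R ▷ X) ≫ mrg X ≫ R) := comp_mono le_rfl (K2 R)
        _ = ((R ≫ dagger R) ▷ X) ≫ mrg X ≫ R := by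
            simp only [comp_whiskerRight, Category.assoc]
        _ = mrg X ≫ R := by rw [h]; simp
    · show del X ≤ R ≫ del Y
      calc del X = R ≫ dagger R ≫ del X := by
            rw [← Category.assoc, h, Category.id_comp]
        _ ≤ R ≫ del Y := comp_mono le_rfl (lax_del (dagger R))

end SpanCospanAux

open CartesianBicatRel in
/-- Span and cospan cancellation. -/
theorem span_cospan_cancellation {C : Type u} [Category.{v} C] [MonoidalCategory C]
    [SymmetricCategory C] [∀ X Y : C, PartialOrder (X ⟶ Y)] [CartesianBicatRel C]
    {X Y : C} (R : X ⟶ Y) :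
    ((SingleValued R ∧ Surjective R) ↔ dagger R ≫ R = 𝟙 Y) ∧
    ((CartesianBicatRel.Injective R ∧ Total R) ↔ R ≫ dagger R = 𝟙 X) := by
  exact ⟨SpanCospanAux.span_iff R, SpanCospanAux.cospan_iff R⟩
end

section
/- In a cartesian bicategory of relations, define for R, S : X ⟶ Y the convolution R ⊼ S := Δ_X ; (R ⊗ S) ; ∇_Y and the morphism ⊤ := !_X ; ?_Y. Then ⊼ is associative, commutative and idempotent with unit ⊤; every R : X ⟶ Y satisfies R ≤ ⊤; and R ⊼ S = S if and only if S ≤ R. Consequently each hom-poset C(X,Y) is a meet-semilattice with greatest element ⊤ in which the meet is given by convolution ⊼. -/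
open CategoryTheory MonoidalCategory

universe v u

section Aux
open CartesianBicatRel

variable {C : Type u} [Category.{v} C] [MonoidalCategory C] [SymmetricCategory C]
  [∀ X Y : C, PartialOrder (X ⟶ Y)] [CartesianBicatRel C] {X Y : C}

lemma aux_le_top (R : X ⟶ Y) : R ≤ del X ≫ bng Y := by
  calc R = R ≫ 𝟙 Y := by simp
    _ ≤ R ≫ (del Y ≫ bng Y) := comp_mono le_rfl (adj_del_unit Y)
    _ = (R ≫ del Y) ≫ bng Y := by simp
    _ ≤ del X ≫ bng Y := comp_mono (lax_del R) le_rfl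

lemma aux_conv_mono {R R' S S' : X ⟶ Y} (h : R ≤ R') (h' : S ≤ S') :
    dup X ≫ (R ⊗ₘ S) ≫ mrg Y ≤ dup X ≫ (R' ⊗ₘ S') ≫ mrg Y :=
  comp_mono le_rfl (comp_mono (tensor_mono h h') le_rfl)

lemma aux_unit (R : X ⟶ Y) : dup X ≫ (R ⊗ₘ (del X ≫ bng Y)) ≫ mrg Y = R := by
  have h1 : R ⊗ₘ (del X ≫ bng Y) = (X ◁ del X) ≫ (R ⊗ₘ bng Y) := by
    simp [MonoidalCategory.tensorHom_def']
  have h2 : (R ⊗ₘ bng Y) ≫ mrg Y = (R ▷ 𝟙_ C) ≫ (ρ_ Y).hom := by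
    rw [MonoidalCategory.tensorHom_def, Category.assoc, mrg_bng_right]
  rw [h1]
  calc dup X ≫ ((X ◁ del X) ≫ (R ⊗ₘ bng Y)) ≫ mrg Y
      = (dup X ≫ (X ◁ del X)) ≫ ((R ⊗ₘ bng Y) ≫ mrg Y) := by simp
    _ = (ρ_ X).inv ≫ (R ▷ 𝟙_ C) ≫ (ρ_ Y).hom := by rw [dup_del_right, h2]
    _ = R := by simp

lemma aux_comm (R S : X ⟶ Y) :
    dup X ≫ (R ⊗ₘ S) ≫ mrg Y = dup X ≫ (S ⊗ₘ R) ≫ mrg Y := by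
  conv_lhs => rw [← mrg_comm Y]
  calc dup X ≫ (R ⊗ₘ S) ≫ (β_ Y Y).hom ≫ mrg Y
      = dup X ≫ ((β_ X X).hom ≫ (S ⊗ₘ R)) ≫ mrg Y := by
        rw [← BraidedCategory.braiding_naturality]; simp
    _ = (dup X ≫ (β_ X X).hom) ≫ (S ⊗ₘ R) ≫ mrg Y := by simp
    _ = dup X ≫ (S ⊗ₘ R) ≫ mrg Y := by rw [dup_cocomm]

lemma aux_le_conv_self (R : X ⟶ Y) : R ≤ dup X ≫ (R ⊗ₘ R) ≫ mrg Y := by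
  calc R = R ≫ 𝟙 Y := by simp
    _ ≤ R ≫ (dup Y ≫ mrg Y) := comp_mono le_rfl (adj_dup_unit Y)
    _ = (R ≫ dup Y) ≫ mrg Y := by simp
    _ ≤ (dup X ≫ (R ⊗ₘ R)) ≫ mrg Y := comp_mono (lax_dup R) le_rfl
    _ = dup X ≫ (R ⊗ₘ R) ≫ mrg Y := by simp

lemma aux_idem (R : X ⟶ Y) : dup X ≫ (R ⊗ₘ R) ≫ mrg Y = R := by
  refine le_antisymm ?_ (aux_le_conv_self R)
  calc dup X ≫ (R ⊗ₘ R) ≫ mrg Y ≤ dup X ≫ (R ⊗ₘ (del X ≫ bng Y)) ≫ mrg Y :=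
        aux_conv_mono le_rfl (aux_le_top R)
    _ = R := aux_unit R

lemma aux_assoc (R S T : X ⟶ Y) :
    dup X ≫ ((dup X ≫ (R ⊗ₘ S) ≫ mrg Y) ⊗ₘ T) ≫ mrg Y =
    dup X ≫ (R ⊗ₘ (dup X ≫ (S ⊗ₘ T) ≫ mrg Y)) ≫ mrg Y := by
  have hL : (dup X ≫ (R ⊗ₘ S) ≫ mrg Y) ⊗ₘ T =
      (dup X ▷ X) ≫ ((R ⊗ₘ S) ⊗ₘ T) ≫ (mrg Y ▷ Y) := by
    calc (dup X ≫ (R ⊗ₘ S) ≫ mrg Y) ⊗ₘ T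
        = (dup X ≫ (R ⊗ₘ S) ≫ mrg Y) ⊗ₘ (𝟙 X ≫ T ≫ 𝟙 Y) := by simp
      _ = (dup X ⊗ₘ 𝟙 X) ≫ ((R ⊗ₘ S) ⊗ₘ T) ≫ (mrg Y ⊗ₘ 𝟙 Y) := by
          rw [← MonoidalCategory.tensorHom_comp_tensorHom, ← MonoidalCategory.tensorHom_comp_tensorHom]
      _ = (dup X ▷ X) ≫ ((R ⊗ₘ S) ⊗ₘ T) ≫ (mrg Y ▷ Y) := by
          rw [MonoidalCategory.tensorHom_id, MonoidalCategory.tensorHom_id]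
  have hR : R ⊗ₘ (dup X ≫ (S ⊗ₘ T) ≫ mrg Y) =
      (X ◁ dup X) ≫ (R ⊗ₘ (S ⊗ₘ T)) ≫ (Y ◁ mrg Y) := by
    calc R ⊗ₘ (dup X ≫ (S ⊗ₘ T) ≫ mrg Y)
        = (𝟙 X ≫ R ≫ 𝟙 Y) ⊗ₘ (dup X ≫ (S ⊗ₘ T) ≫ mrg Y) := by simp
      _ = (𝟙 X ⊗ₘ dup X) ≫ (R ⊗ₘ (S ⊗ₘ T)) ≫ (𝟙 Y ⊗ₘ mrg Y) := by
          rw [← MonoidalCategory.tensorHom_comp_tensorHom, ← MonoidalCategory.tensorHom_comp_tensorHom]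
      _ = (X ◁ dup X) ≫ (R ⊗ₘ (S ⊗ₘ T)) ≫ (Y ◁ mrg Y) := by
          rw [MonoidalCategory.id_tensorHom, MonoidalCategory.id_tensorHom]
  rw [hL, hR]
  simp only [Category.assoc]
  slice_lhs 4 5 => rw [mrg_assoc]
  slice_lhs 3 4 => rw [MonoidalCategory.associator_naturality]
  slice_lhs 1 3 => rw [dup_coassoc]
  simp

end Aux

open CartesianBicatRel in
/-- Convolution `R ⊼ S := Δ;(R⊗S);∇` is associative, commutative, idempotent with unit
`⊤ := !;?`; moreover `⊤` is the greatest element, `R ⊼ S = S ↔ S ≤ R`, and convolution is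
the binary meet, so each hom-poset is a meet-semilattice with top. -/
theorem convolution_meet_semilattice {C : Type u} [Category.{v} C] [MonoidalCategory C]
    [SymmetricCategory C] [∀ X Y : C, PartialOrder (X ⟶ Y)] [CartesianBicatRel C]
    {X Y : C} :
    (∀ R S T : X ⟶ Y,
      dup X ≫ ((dup X ≫ (R ⊗ₘ S) ≫ mrg Y) ⊗ₘ T) ≫ mrg Y =
      dup X ≫ (R ⊗ₘ (dup X ≫ (S ⊗ₘ T) ≫ mrg Y)) ≫ mrg Y) ∧
    (∀ R S : X ⟶ Y, dup X ≫ (R ⊗ₘ S) ≫ mrg Y = dup X ≫ (S ⊗ₘ R) ≫ mrg Y) ∧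
    (∀ R : X ⟶ Y, dup X ≫ (R ⊗ₘ R) ≫ mrg Y = R) ∧
    (∀ R : X ⟶ Y, dup X ≫ (R ⊗ₘ (del X ≫ bng Y)) ≫ mrg Y = R) ∧
    (∀ R : X ⟶ Y, R ≤ del X ≫ bng Y) ∧
    (∀ R S : X ⟶ Y, dup X ≫ (R ⊗ₘ S) ≫ mrg Y = S ↔ S ≤ R) ∧
    (∀ R S : X ⟶ Y, dup X ≫ (R ⊗ₘ S) ≫ mrg Y ≤ R ∧ dup X ≫ (R ⊗ₘ S) ≫ mrg Y ≤ S ∧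
      ∀ T : X ⟶ Y, T ≤ R → T ≤ S → T ≤ dup X ≫ (R ⊗ₘ S) ≫ mrg Y) := by
  have top := fun R : X ⟶ Y => aux_le_top R
  have meet_le_left : ∀ R S : X ⟶ Y, dup X ≫ (R ⊗ₘ S) ≫ mrg Y ≤ R := fun R S => by
    calc dup X ≫ (R ⊗ₘ S) ≫ mrg Y ≤ dup X ≫ (R ⊗ₘ (del X ≫ bng Y)) ≫ mrg Y :=
          aux_conv_mono le_rfl (aux_le_top S)
      _ = R := aux_unit R
  have meet_le_right : ∀ R S : X ⟶ Y, dup X ≫ (R ⊗ₘ S) ≫ mrg Y ≤ S := fun R S => by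
    rw [aux_comm]; exact meet_le_left S R
  have le_meet : ∀ R S T : X ⟶ Y, T ≤ R → T ≤ S → T ≤ dup X ≫ (R ⊗ₘ S) ≫ mrg Y :=
    fun R S T h1 h2 => le_trans (aux_le_conv_self T) (aux_conv_mono h1 h2)
  refine ⟨aux_assoc, aux_comm, aux_idem, aux_unit, top, fun R S => ⟨?_, ?_⟩, fun R S =>
    ⟨meet_le_left R S, meet_le_right R S, le_meet R S⟩⟩
  · intro h; rw [← h]; exact meet_le_left R S
  · intro h
    exact le_antisymm (meet_le_right R S) (le_meet R S S h le_rfl)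
end

section
/- The relational model of the bialgebra theory on the natural numbers (with comultiplication the converse of addition) satisfies the bialgebra equation. Concretely: let A : Rel (ℕ × ℕ) ℕ be the graph of addition, A (x₁, x₂) y ↔ x₁ + x₂ = y. Then the composite relation Rel.comp A A.inv : Rel (ℕ × ℕ) (ℕ × ℕ) equals the relation D defined by D (x₁, x₂) (y₁, y₂) ↔ ∃ a b c d : ℕ, a + b = x₁ ∧ c + d = x₂ ∧ a + c = y₁ ∧ b + d = y₂. Equivalently: for natural numbers, x₁ + x₂ = y₁ + y₂ if and only if there exist a, b, c, d : ℕ with a + b = x₁, c + d = x₂, a + c = y₁ and b + d = y₂. -/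
/-- Converse of a relation (removed from Mathlib; old definition restored). -/
def Rel.inv {α β : Type*} (r : Rel α β) : Rel β α := flip r

/-- Composition of relations (removed from Mathlib; old definition restored). -/
def Rel.comp {α β γ : Type*} (r : Rel α β) (s : Rel β γ) : Rel α γ := fun x z => ∃ y, r x y ∧ s y z

/-- The graph of addition on the natural numbers. -/
def addRel : Rel (ℕ × ℕ) ℕ := fun p y => p.1 + p.2 = y

/-- The right-hand side of the bialgebra equation `Δ;(∇⊗∇)`-style relation. -/
def bialgRel : Rel (ℕ × ℕ) (ℕ × ℕ) := fun x y =>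
  ∃ a b c d : ℕ, a + b = x.1 ∧ c + d = x.2 ∧ a + c = y.1 ∧ b + d = y.2

lemma key (x₁ x₂ y₁ y₂ : ℕ) : x₁ + x₂ = y₁ + y₂ ↔
    ∃ a b c d : ℕ, a + b = x₁ ∧ c + d = x₂ ∧ a + c = y₁ ∧ b + d = y₂ := by
  constructor
  · intro h
    exact ⟨min x₁ y₁, x₁ - min x₁ y₁, y₁ - min x₁ y₁, x₂ - (y₁ - min x₁ y₁), by omega⟩
  · rintro ⟨a, b, c, d, h⟩; omega

/-- The relational model of the bialgebra theory on ℕ (comultiplication the converse of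
addition) satisfies the bialgebra equation. -/
theorem nat_bialgebra_equation :
    Rel.comp addRel addRel.inv = bialgRel ∧
    (∀ x₁ x₂ y₁ y₂ : ℕ, x₁ + x₂ = y₁ + y₂ ↔
      ∃ a b c d : ℕ, a + b = x₁ ∧ c + d = x₂ ∧ a + c = y₁ ∧ b + d = y₂) := by
  refine ⟨?_, key⟩
  ext ⟨x₁, x₂⟩ ⟨y₁, y₂⟩
  simp only [Rel.comp, Rel.inv, addRel, bialgRel, Function.flip_def]
  constructor
  · rintro ⟨z, h1, h2⟩
    exact (key x₁ x₂ y₁ y₂).mp (by simp_all)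
  · rintro h
    exact ⟨x₁ + x₂, rfl, by have := (key x₁ x₂ y₁ y₂).mpr h; omega⟩
end

section
/- A relation R : Rel α β satisfies Rel.comp R R.inv = Eq and Rel.comp R.inv R = Eq (i.e. the converse of R is a two-sided inverse of R in the category of sets and relations) if and only if R is the graph of a bijection, i.e. there exists an equivalence e : α ≃ β with (∀ a b, R a b ↔ e a = b). -/
/-- A relation whose converse is a two-sided inverse in the category of sets and relations
is exactly the graph of a bijection. -/
theorem rel_inv_twoSidedInverse_iff_bijection {α β : Type*} (R : Rel α β) :
    (Relation.Comp R (flip R) = Eq ∧ Relation.Comp (flip R) R = Eq) ↔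
      ∃ e : α ≃ β, ∀ a b, R a b ↔ e a = b := by
  constructor
  · rintro ⟨h1, h2⟩
    have htot : ∀ a, ∃ b, R a b := by
      intro a
      have : Relation.Comp R (flip R) a a := h1 ▸ rfl
      obtain ⟨b, hb, -⟩ := this
      exact ⟨b, hb⟩
    have hsurj : ∀ b, ∃ a, R a b := by
      intro b
      have : Relation.Comp (flip R) R b b := h2 ▸ rfl
      obtain ⟨a, ha, -⟩ := this
      exact ⟨a, ha⟩
    have hfun : ∀ a b b', R a b → R a b' → b = b' := by
      intro a b b' hb hb'
      have : Relation.Comp (flip R) R b b' := ⟨a, hb, hb'⟩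
      rwa [h2] at this
    have hinj : ∀ a a' b, R a b → R a' b → a = a' := by
      intro a a' b hb hb'
      have : Relation.Comp R (flip R) a a' := ⟨b, hb, hb'⟩
      rwa [h1] at this
    choose f hf using htot
    have hbij : Function.Bijective f := by
      constructor
      · intro a a' h
        exact hinj a a' (f a) (hf a) (h ▸ hf a')
      · intro b
        obtain ⟨a, ha⟩ := hsurj b
        exact ⟨a, hfun a (f a) b (hf a) ha⟩
    refine ⟨Equiv.ofBijective f hbij, fun a b => ⟨fun h => ?_, fun h => ?_⟩⟩
    · exact hfun a (f a) b (hf a) h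
    · exact h ▸ hf a
  · rintro ⟨e, he⟩
    constructor
    · ext a a'
      constructor
      · rintro ⟨b, hb, hb'⟩
        have := (he a b).1 hb
        have := (he a' b).1 hb'
        exact e.injective (by simp_all)
      · rintro rfl
        exact ⟨e a, (he a (e a)).2 rfl, (he a (e a)).2 rfl⟩
    · ext b b'
      constructor
      · rintro ⟨a, ha, ha'⟩
        have h1 := (he a b).1 ha
        have h2 := (he a b').1 ha'
        rw [← h1, ← h2]
      · rintro rfl
        exact ⟨e.symm b, (he _ b).2 (by simp), (he _ b).2 (by simp)⟩
end
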